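/- Let s : ℝ^{N×N} → ℝ^{N×N} be continuous, permutation equivariant, and a conservative vector field (i.e., s = ∇f for some differentiable f : ℝ^{N×N} → ℝ). Then the function g(A) = ∫_0^1 ⟨s(tA), A⟩_F dt is permutation invariant, and f(A) - f(0) = g(A) for all A; in particular f(A^[π]) = f(A) for all A and all permutations π. -/

import Mathlib

attribute [local instance] Matrix.frobeniusNormedAddCommGroup Matrix.frobeniusNormedSpace

/-- If `s` is continuous, permutation equivariant and conservative (s = ∇f),
then the line integral `g(A) = ∫_0^1 ⟨s(tA), A⟩_F dt` is permutation
invariant, equals `f(A) - f(0)`, and hence `f` is permutation invariant. -/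
theorem line_integral_of_equivariant_conservative_field {N : ℕ}
    (s : Matrix (Fin N) (Fin N) ℝ → Matrix (Fin N) (Fin N) ℝ)
    (f : Matrix (Fin N) (Fin N) ℝ → ℝ)
    (hs_cont : Continuous s)
    (hequiv : ∀ (A : Matrix (Fin N) (Fin N) ℝ) (π : Equiv.Perm (Fin N)),
      s (Matrix.of fun i j => A (π i) (π j)) = Matrix.of fun i j => s A (π i) (π j))
    (hf : Differentiable ℝ f)
    (hgrad : ∀ (A : Matrix (Fin N) (Fin N) ℝ) (i j : Fin N),
      s A i j = fderiv ℝ f A (Matrix.single i j 1))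
    (g : Matrix (Fin N) (Fin N) ℝ → ℝ)
    (hg : ∀ A : Matrix (Fin N) (Fin N) ℝ,
      g A = ∫ t in (0:ℝ)..1, ∑ i : Fin N, ∑ j : Fin N, s (t • A) i j * A i j) :
    (∀ (A : Matrix (Fin N) (Fin N) ℝ) (π : Equiv.Perm (Fin N)),
        g (Matrix.of fun i j => A (π i) (π j)) = g A) ∧
    (∀ A : Matrix (Fin N) (Fin N) ℝ, f A - f 0 = g A) ∧
    (∀ (A : Matrix (Fin N) (Fin N) ℝ) (π : Equiv.Perm (Fin N)),
        f (Matrix.of fun i j => A (π i) (π j)) = f A) := by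
  have key : ∀ (X A : Matrix (Fin N) (Fin N) ℝ),
      fderiv ℝ f X A = ∑ i, ∑ j, s X i j * A i j := by
    intro X A
    conv_lhs => rw [Matrix.matrix_eq_sum_single A]
    rw [map_sum]
    refine Finset.sum_congr rfl fun i _ => ?_
    rw [map_sum]
    refine Finset.sum_congr rfl fun j _ => ?_
    have h1 : Matrix.single i j (A i j) = A i j • Matrix.single i j 1 := by
      rw [Matrix.smul_single]; simp
    rw [h1, map_smul, ← hgrad, smul_eq_mul, mul_comm]
  have hginv : ∀ (A : Matrix (Fin N) (Fin N) ℝ) (π : Equiv.Perm (Fin N)),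
      g (Matrix.of fun i j => A (π i) (π j)) = g A := by
    intro A π
    rw [hg, hg]
    congr 1
    funext t
    have hperm : t • (Matrix.of fun i j => A (π i) (π j))
        = Matrix.of fun i j => (t • A) (π i) (π j) := by
      ext i j; simp
    rw [hperm, hequiv]
    simp only [Matrix.of_apply]
    calc ∑ i, ∑ j, s (t • A) (π i) (π j) * A (π i) (π j)
        = ∑ i, ∑ j, s (t • A) (π i) j * A (π i) j :=
          Finset.sum_congr rfl fun i _ =>
            Equiv.sum_comp π (fun j => s (t • A) (π i) j * A (π i) j)
      _ = ∑ i, ∑ j, s (t • A) i j * A i j :=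
          Equiv.sum_comp π (fun i => ∑ j, s (t • A) i j * A i j)
  have hfg : ∀ A : Matrix (Fin N) (Fin N) ℝ, f A - f 0 = g A := by
    intro A
    rw [hg]
    have hderiv : ∀ t ∈ Set.uIcc (0:ℝ) 1, HasDerivAt (fun t => f (t • A))
        (∑ i, ∑ j, s (t • A) i j * A i j) t := by
      intro t _
      have h1 : HasDerivAt (fun t : ℝ => t • A) A t := by
        exact ((hasDerivAt_id t).smul_const A).congr_deriv (one_smul ℝ A)
      have h2 := (hf (t • A)).hasFDerivAt.comp_hasDerivAt t h1
      rw [← key (t • A) A]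
      exact h2
    have hcont : Continuous (fun t : ℝ => ∑ i, ∑ j, s (t • A) i j * A i j) := by
      refine continuous_finset_sum _ fun i _ => continuous_finset_sum _ fun j _ => ?_
      exact ((hs_cont.comp (continuous_id.smul continuous_const)).matrix_elem i j).mul
        continuous_const
    have h := intervalIntegral.integral_eq_sub_of_hasDerivAt hderiv
      (hcont.intervalIntegrable 0 1)
    simpa using h.symm
  refine ⟨hginv, hfg, fun A π => ?_⟩
  have h := hfg (Matrix.of fun i j => A (π i) (π j))
  rw [hginv A π, ← hfg A] at h
  linarith
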